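/- For every real β, every K_1 > 0 and every S > 0: S^{β−1}·(K_1 − S)_+ = K_1^{β−1}·(K_1 − S)_+ + (β−1)·∫_0^{K_1} K^{β−2}·((β−2)·K_1/K − β)·(K − S)_+ dK, where the integral converges absolutely (the integrand vanishes for K ≤ S). (Example: exact static replication of the exotic payoff S^{β−1}(K_1 − S)_+, arising from the semi-static hedge of a down-and-in call, by a put at the kink K_1 with weight equal to the jump K_1^{β−1} of the derivative plus a continuum of puts.) -/

import Mathlib

open MeasureTheory Set

/-- Exact static replication of the exotic payoff `S^(β-1)·(K₁ - S)_+` arising from the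
semi-static hedge of a down-and-in call, by a put at the kink `K₁` with weight equal to the
jump `K₁^(β-1)` of the derivative plus a continuum of puts. -/
theorem stmt_6 :
    ∀ β K₁ S : ℝ, 0 < K₁ → 0 < S →
      IntegrableOn
        (fun K => K ^ (β - 2) * ((β - 2) * K₁ / K - β) * max (K - S) 0) (Ioo 0 K₁) ∧
      S ^ (β - 1) * max (K₁ - S) 0
        = K₁ ^ (β - 1) * max (K₁ - S) 0
          + (β - 1) * ∫ K in Ioo 0 K₁,
              K ^ (β - 2) * ((β - 2) * K₁ / K - β) * max (K - S) 0 := by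
  intro β K₁ S hK₁ hS
  set f : ℝ → ℝ := fun K => K ^ (β - 2) * ((β - 2) * K₁ / K - β) * max (K - S) 0 with hf
  by_cases hSK : K₁ ≤ S
  · have hzero : ∀ K ∈ Ioo (0:ℝ) K₁, f K = 0 := by
      intro K hK
      have : K - S ≤ 0 := by linarith [hK.2]
      simp [hf, max_eq_right this]
    constructor
    · exact (integrableOn_congr_fun hzero measurableSet_Ioo).mpr (integrableOn_zero)
    · rw [setIntegral_congr_fun measurableSet_Ioo hzero]
      simp [max_eq_right (by linarith : K₁ - S ≤ 0)]
  · push_neg at hSK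
    set g : ℝ → ℝ := fun K => K ^ (β - 2) * ((β - 2) * K₁ / K - β) * (K - S) with hg
    have hcont : ContinuousOn g (Icc S K₁) := by
      have hne : ∀ x ∈ Icc S K₁, x ≠ 0 := fun x hx => (lt_of_lt_of_le hS hx.1).ne'
      apply ContinuousOn.mul
      apply ContinuousOn.mul
      · exact fun x hx => ((Real.continuousAt_rpow_const x _ (Or.inl (hne x hx))).continuousWithinAt)
      · exact (continuousOn_const.div continuousOn_id hne).sub continuousOn_const
      · exact continuousOn_id.sub continuousOn_const
    have hfg : EqOn f g (Ioc S K₁) := by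
      intro K hK
      have : (0:ℝ) ≤ K - S := by linarith [hK.1]
      simp [hf, hg, max_eq_left this]
    have hint2 : IntegrableOn f (Ioc S K₁) := by
      rw [integrableOn_congr_fun hfg measurableSet_Ioc]
      exact (hcont.integrableOn_Icc).mono_set Ioc_subset_Icc_self
    have hzero1 : ∀ K ∈ Ioc (0:ℝ) S, f K = 0 := by
      intro K hK
      have : K - S ≤ 0 := by linarith [hK.2]
      simp [hf, max_eq_right this]
    have hint1 : IntegrableOn f (Ioc 0 S) :=
      (integrableOn_congr_fun hzero1 measurableSet_Ioc).mpr integrableOn_zero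
    have hunion : Ioc (0:ℝ) S ∪ Ioc S K₁ = Ioc 0 K₁ := Ioc_union_Ioc_eq_Ioc hS.le hSK.le
    have hintall : IntegrableOn f (Ioc 0 K₁) := by
      rw [← hunion]; exact hint1.union hint2
    constructor
    · exact hintall.mono_set Ioo_subset_Ioc_self
    · -- antiderivative
      set F : ℝ → ℝ := fun K =>
        (β-2)*K₁*K^(β-1) - (β-1)*S*K₁*K^(β-2) - (β-1)*K^β + β*S*K^(β-1) with hF
      have hderiv : ∀ x ∈ uIcc S K₁, HasDerivAt F ((β-1) * g x) x := by
        intro x hx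
        rw [uIcc_of_le hSK.le] at hx
        have hx0 : (0:ℝ) < x := lt_of_lt_of_le hS hx.1
        have d1 : HasDerivAt (fun K:ℝ => K ^ (β-1)) ((β-1) * x^(β-1-1)) x :=
          Real.hasDerivAt_rpow_const (Or.inl hx0.ne')
        have d2 : HasDerivAt (fun K:ℝ => K ^ (β-2)) ((β-2) * x^(β-2-1)) x :=
          Real.hasDerivAt_rpow_const (Or.inl hx0.ne')
        have d3 : HasDerivAt (fun K:ℝ => K ^ β) (β * x^(β-1)) x :=
          Real.hasDerivAt_rpow_const (Or.inl hx0.ne')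
        have hD : HasDerivAt F
            (((β-2)*K₁) * ((β-1) * x^(β-1-1)) - ((β-1)*S*K₁) * ((β-2) * x^(β-2-1))
              - (β-1) * (β * x^(β-1)) + (β*S) * ((β-1) * x^(β-1-1))) x :=
          (((d1.const_mul ((β-2)*K₁)).sub (d2.const_mul ((β-1)*S*K₁))).sub
            (d3.const_mul (β-1))).add (d1.const_mul (β*S))
        convert hD using 1
        have ha : x^(β-2) = x^(β-3)*x := by
          rw [show β-2 = β-3+1 by ring, Real.rpow_add_one hx0.ne']
        have hb : x^(β-1) = x^(β-2)*x := by
          rw [show β-1 = β-2+1 by ring, Real.rpow_add_one hx0.ne']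
        have he1 : β-1-1 = β-2 := by ring
        have he2 : β-2-1 = β-3 := by ring
        rw [he1, he2, hg]
        simp only
        rw [hb, ha]
        field_simp
        ring
      have hii : IntervalIntegrable (fun x => (β-1) * g x) volume S K₁ := by
        apply ContinuousOn.intervalIntegrable
        rw [uIcc_of_le hSK.le]
        exact continuousOn_const.mul hcont
      have hftc : ∫ x in S..K₁, (β-1) * g x = F K₁ - F S :=
        intervalIntegral.integral_eq_sub_of_hasDerivAt hderiv hii
      have hI : ∫ K in Ioo (0:ℝ) K₁, f K = ∫ x in S..K₁, g x := by
        rw [← MeasureTheory.integral_Ioc_eq_integral_Ioo, ← hunion,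
          setIntegral_union (Ioc_disjoint_Ioc_of_le le_rfl) measurableSet_Ioc hint1 hint2,
          setIntegral_congr_fun measurableSet_Ioc hzero1,
          setIntegral_congr_fun measurableSet_Ioc hfg,
          intervalIntegral.integral_of_le hSK.le]
        simp
      rw [hI, show (β-1) * ∫ x in S..K₁, g x = ∫ x in S..K₁, (β-1) * g x by
        rw [intervalIntegral.integral_const_mul], hftc]
      have hmax : max (K₁ - S) 0 = K₁ - S := max_eq_left (by linarith)
      have hK1b : K₁^(β-1) = K₁^(β-2)*K₁ := by
        rw [← Real.rpow_add_one hK₁.ne']; ring_nf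
      have hK1c : K₁^β = K₁^(β-1)*K₁ := by
        rw [← Real.rpow_add_one hK₁.ne']; ring_nf
      have hSb : S^(β-1) = S^(β-2)*S := by
        rw [← Real.rpow_add_one hS.ne']; ring_nf
      have hSc : S^β = S^(β-1)*S := by
        rw [← Real.rpow_add_one hS.ne']; ring_nf
      rw [hmax, hF]
      simp only
      rw [hK1c, hSc, hK1b, hSb]
      ring
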